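/- Under the hypotheses dim Υ^{(n)} = 1 and Υ^{(n+1)} = 0, the operator θ⊗θ on V⊗V commutes with the Hecke symmetry R; consequently θ extends to graded algebra automorphisms of Λ(V,R) and S(V,R). -/

import Mathlib

/-- The basic transposition `τ_i = (i, i+1)` (0-based) as a permutation of `ℕ`. -/
def tau (i : ℕ) : Equiv.Perm ℕ := Equiv.swap i (i + 1)

/-- The Coxeter length of a permutation of `{0, …, n-1}`, computed as its number of
inversions. -/
def invLen (n : ℕ) (σ : Equiv.Perm ℕ) : ℕ :=
  ((Finset.range n ×ˢ Finset.range n).filter (fun p => p.1 < p.2 ∧ σ p.2 < σ p.1)).card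

/-- The canonical embedding of the symmetric group `S_n = Perm (Fin n)` into the
permutations of `ℕ` (fixing every `m ≥ n`). -/
def permOfFin {n : ℕ} (σ : Equiv.Perm (Fin n)) : Equiv.Perm ℕ :=
  σ.extendDomain Fin.equivSubtype

/-- `σ` is a distinguished left coset representative of the Young subgroup `S_{a,b}`
of `S_{a+b}`: it is increasing on the blocks `{0,…,a-1}` and `{a,…,a+b-1}`. -/
def isDist (a b : ℕ) (σ : Equiv.Perm ℕ) : Prop :=
  ∀ i : ℕ, i + 1 < a + b → i + 1 ≠ a → σ i < σ (i + 1)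

/-- The cycle `i ↷ j`: for `i < j` it is `τ_i τ_{i+1} ⋯ τ_{j-1}`; for `i > j` it is
`τ_{i-1} ⋯ τ_{j+1} τ_j`; for `i = j` the identity. -/
def cyc (i j : ℕ) : Equiv.Perm ℕ :=
  if i ≤ j then ((List.range (j - i)).map (fun t => tau (i + t))).prod
  else ((List.range (i - j)).map (fun t => tau (i - 1 - t))).prod

open scoped TensorProduct

variable (K V : Type*) [Field K] [AddCommGroup V] [Module K V]

/-- The multiplication equivalence `V^{⊗a} ⊗ V^{⊗b} ≃ V^{⊗(a+b)}`. -/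
noncomputable def mulPow (a b : ℕ) :
    ((⨂[K] _ : Fin a, V) ⊗[K] (⨂[K] _ : Fin b, V)) ≃ₗ[K] (⨂[K] _ : Fin (a + b), V) :=
  (PiTensorProduct.tmulEquiv K V).trans
    (PiTensorProduct.reindex K (fun _ => V) finSumFinEquiv)

/-- Transport along an equality of tensor power sizes. -/
noncomputable def castPow {a b : ℕ} (h : a = b) :
    (⨂[K] _ : Fin a, V) ≃ₗ[K] (⨂[K] _ : Fin b, V) :=
  PiTensorProduct.reindex K (fun _ => V) (finCongr h)

/-- The canonical equivalence `V^{⊗1} ≃ V`. -/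
noncomputable def oneEquiv : (⨂[K] _ : Fin 1, V) ≃ₗ[K] V :=
  PiTensorProduct.subsingletonEquiv (0 : Fin 1)

/-- The canonical equivalence `V^{⊗2} ≃ V ⊗ V`. -/
noncomputable def pairEquiv : (⨂[K] _ : Fin 2, V) ≃ₗ[K] V ⊗[K] V :=
  (castPow K V (show (2 : ℕ) = 1 + 1 by omega)).trans
    ((mulPow K V 1 1).symm.trans (TensorProduct.congr (oneEquiv K V) (oneEquiv K V)))

/-- The operator `Id^{⊗a} ⊗ R ⊗ Id^{⊗b}` on `V^{⊗(a+2+b)}`. -/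
noncomputable def TOpAux (R : V ⊗[K] V →ₗ[K] V ⊗[K] V) (a b : ℕ) :
    Module.End K (⨂[K] _ : Fin (a + (2 + b)), V) :=
  let e : (⨂[K] _ : Fin (a + (2 + b)), V) ≃ₗ[K]
      (⨂[K] _ : Fin a, V) ⊗[K] ((V ⊗[K] V) ⊗[K] (⨂[K] _ : Fin b, V)) :=
    (mulPow K V a (2 + b)).symm.trans
      (TensorProduct.congr (LinearEquiv.refl K _)
        ((mulPow K V 2 b).symm.trans
          (TensorProduct.congr (pairEquiv K V) (LinearEquiv.refl K _))))
  e.symm.toLinearMap ∘ₗ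
    TensorProduct.map LinearMap.id (TensorProduct.map R LinearMap.id) ∘ₗ e.toLinearMap

/-- The operator `T_i^{(n)} = Id^{⊗i} ⊗ R ⊗ Id^{⊗(n-i-2)}` on `V^{⊗n}` (0-based `i`,
acting on the tensor slots `i` and `i+1`); the identity if `i + 2 > n`. -/
noncomputable def TOp (R : V ⊗[K] V →ₗ[K] V ⊗[K] V) (n i : ℕ) :
    Module.End K (⨂[K] _ : Fin n, V) :=
  if h : i + 2 ≤ n then
    (castPow K V (show i + (2 + (n - i - 2)) = n by omega)).toLinearMap ∘ₗ
      TOpAux K V R i (n - i - 2) ∘ₗ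
        (castPow K V (show n = i + (2 + (n - i - 2)) by omega)).toLinearMap
  else LinearMap.id

/-- The subspace `Υ^{(n)} = ⋂_{i} (T_i − q)·V^{⊗n}` of `V^{⊗n}`
(with `Υ^{(0)} = k`, `Υ^{(1)} = V`, `Υ^{(2)} = Im(R − q·Id)`). -/
noncomputable def Ups (R : V ⊗[K] V →ₗ[K] V ⊗[K] V) (q : K) (n : ℕ) :
    Submodule K (⨂[K] _ : Fin n, V) :=
  ⨅ i ∈ Finset.range (n - 1), LinearMap.range (TOp K V R n i - q • LinearMap.id)

/-- The multiplication map `V ⊗ V → T(V)`, `x ⊗ y ↦ ι(x)·ι(y)`, into the tensor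
algebra. -/
noncomputable def mur : V ⊗[K] V →ₗ[K] TensorAlgebra K V :=
  TensorProduct.lift
    (((LinearMap.mul K (TensorAlgebra K V)).comp (TensorAlgebra.ι K)).compl₂
      (TensorAlgebra.ι K))

/-- The relation on `T(V)` whose generators are the elements of `Im(R − q·Id)`
(viewed in degree 2); `T(V)` modulo this relation is the `R`-symmetric algebra
`S(V,R)`. -/
def relS (R : V ⊗[K] V →ₗ[K] V ⊗[K] V) (q : K) :
    TensorAlgebra K V → TensorAlgebra K V → Prop :=
  fun x y => y = 0 ∧ ∃ w : V ⊗[K] V, x = mur K V ((R - q • (LinearMap.id : V ⊗[K] V →ₗ[K] V ⊗[K] V)) w)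

/-- The relation on `T(V)` whose generators are the elements of `Ker(R − q·Id)`
(viewed in degree 2); `T(V)` modulo this relation is the `R`-exterior algebra
`Λ(V,R)`. -/
def relL (R : V ⊗[K] V →ₗ[K] V ⊗[K] V) (q : K) :
    TensorAlgebra K V → TensorAlgebra K V → Prop :=
  fun x y => y = 0 ∧ ∃ w : V ⊗[K] V, (R - q • (LinearMap.id : V ⊗[K] V →ₗ[K] V ⊗[K] V)) w = 0 ∧ x = mur K V w

section Aux
variable {K V : Type*} [Field K] [AddCommGroup V] [Module K V]
open PiTensorProduct

lemma castPow_tprod {a b : ℕ} (h : a = b) (f : Fin a → V) :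
    castPow K V h (tprod K f) = tprod K (fun j => f (Fin.cast h.symm j)) := by
  simp [castPow, reindex_tprod]

lemma mulPow_tprod (a b : ℕ) (f : Fin a → V) (g : Fin b → V) :
    mulPow K V a b (tprod K f ⊗ₜ[K] tprod K g)
      = tprod K (fun j => Sum.elim f g (finSumFinEquiv.symm j)) := by
  simp [mulPow, reindex_tprod]

lemma mulPow_symm_tprod (a b : ℕ) (f : Fin (a + b) → V) :
    (mulPow K V a b).symm (tprod K f)
      = tprod K (fun j => f (Fin.castAdd b j)) ⊗ₜ[K] tprod K (fun j => f (Fin.natAdd a j)) := by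
  rw [LinearEquiv.symm_apply_eq, mulPow_tprod]
  congr 1
  funext j
  refine Fin.addCases (fun i => ?_) (fun i => ?_) j <;> simp

lemma oneEquiv_symm_apply (v : V) :
    (oneEquiv K V).symm v = tprod K (fun _ => v) := by
  rw [LinearEquiv.symm_apply_eq, oneEquiv, subsingletonEquiv_apply_tprod]

lemma pairEquiv_tprod (f : Fin 2 → V) :
    pairEquiv K V (tprod K f) = f 0 ⊗ₜ[K] f 1 := by
  simp only [pairEquiv, LinearEquiv.trans_apply, castPow_tprod, mulPow_symm_tprod,
    TensorProduct.congr_tmul, oneEquiv, subsingletonEquiv_apply_tprod]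
  congr 2

lemma pairEquiv_symm_tmul (x y : V) :
    (pairEquiv K V).symm (x ⊗ₜ[K] y) = tprod K ![x, y] := by
  rw [LinearEquiv.symm_apply_eq, pairEquiv_tprod]
  rfl

end Aux
section Aux2
variable {K V : Type*} [Field K] [AddCommGroup V] [Module K V]
open PiTensorProduct

/-- Update two adjacent slots of a tuple. -/
def upd2 {N : ℕ} (f : Fin N → V) (i : ℕ) (x y : V) : Fin N → V :=
  fun j => if (j : ℕ) = i then x else if (j : ℕ) = i + 1 then y else f j

noncomputable def bigE (K V : Type*) [Field K] [AddCommGroup V] [Module K V] (a b : ℕ) :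
    (⨂[K] _ : Fin (a + (2 + b)), V) ≃ₗ[K]
      (⨂[K] _ : Fin a, V) ⊗[K] ((V ⊗[K] V) ⊗[K] (⨂[K] _ : Fin b, V)) :=
  (mulPow K V a (2 + b)).symm.trans
    (TensorProduct.congr (LinearEquiv.refl K _)
      ((mulPow K V 2 b).symm.trans
        (TensorProduct.congr (pairEquiv K V) (LinearEquiv.refl K _))))

lemma TOpAux_eq (R : V ⊗[K] V →ₗ[K] V ⊗[K] V) (a b : ℕ) : TOpAux K V R a b =
    (bigE K V a b).symm.toLinearMap ∘ₗ
      TensorProduct.map LinearMap.id (TensorProduct.map R LinearMap.id) ∘ₗ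
        (bigE K V a b).toLinearMap := rfl

lemma bigE_tprod (a b : ℕ) (g : Fin (a + (2 + b)) → V) :
    bigE K V a b (tprod K g)
      = tprod K (fun j : Fin a => g (Fin.castAdd (2 + b) j)) ⊗ₜ[K]
          ((g (Fin.natAdd a (Fin.castAdd b 0)) ⊗ₜ[K] g (Fin.natAdd a (Fin.castAdd b 1))) ⊗ₜ[K]
            tprod K (fun j : Fin b => g (Fin.natAdd a (Fin.natAdd 2 j)))) := by
  simp [bigE, mulPow_symm_tprod, pairEquiv_tprod]

lemma TOpAux_tprod (R : V ⊗[K] V →ₗ[K] V ⊗[K] V) (a b : ℕ) (f : Fin (a + (2 + b)) → V)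
    (S : Finset (V × V))
    (hS : R (f ⟨a, by omega⟩ ⊗ₜ[K] f ⟨a + 1, by omega⟩) = ∑ p ∈ S, p.1 ⊗ₜ[K] p.2) :
    TOpAux K V R a b (tprod K f) = ∑ p ∈ S, tprod K (upd2 f a p.1 p.2) := by
  rw [TOpAux_eq]
  simp only [LinearMap.coe_comp, Function.comp_apply, LinearEquiv.coe_coe]
  rw [bigE_tprod]
  have e0 : (Fin.natAdd a (Fin.castAdd b 0) : Fin (a + (2 + b))) = ⟨a, by omega⟩ := by
    ext; simp
  have e1 : (Fin.natAdd a (Fin.castAdd b 1) : Fin (a + (2 + b))) = ⟨a + 1, by omega⟩ := by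
    ext; simp
  rw [TensorProduct.map_tmul, TensorProduct.map_tmul, LinearMap.id_apply, LinearMap.id_apply,
    e0, e1, hS, TensorProduct.sum_tmul, TensorProduct.tmul_sum, map_sum]
  refine Finset.sum_congr rfl (fun p hp => ?_)
  rw [LinearEquiv.symm_apply_eq, bigE_tprod]
  congr 1
  · exact congrArg (⇑(PiTensorProduct.tprod K)) (funext fun j => by
      simp only [upd2, Fin.coe_castAdd]
      rw [if_neg (by omega), if_neg (by omega)])
  congr 1
  · congr 1
    · rw [e0]; simp [upd2]
    · rw [e1]; simp [upd2]
  · exact congrArg (⇑(PiTensorProduct.tprod K)) (funext fun j => by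
      simp only [upd2, Fin.coe_natAdd]
      rw [if_neg (by omega), if_neg (by omega)])

lemma TOp_tprod {N : ℕ} (R : V ⊗[K] V →ₗ[K] V ⊗[K] V) (i : ℕ) (h : i + 2 ≤ N)
    (f : Fin N → V) (S : Finset (V × V))
    (hS : R (f ⟨i, by omega⟩ ⊗ₜ[K] f ⟨i + 1, by omega⟩) = ∑ p ∈ S, p.1 ⊗ₜ[K] p.2) :
    TOp K V R N i (tprod K f) = ∑ p ∈ S, tprod K (upd2 f i p.1 p.2) := by
  rw [TOp, dif_pos h]
  simp only [LinearMap.coe_comp, Function.comp_apply, LinearEquiv.coe_coe]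
  rw [castPow_tprod]
  rw [TOpAux_tprod _ i (N - i - 2) _ S (by
    have ei : (Fin.cast (show N = i + (2 + (N - i - 2)) by omega).symm
        (⟨i, by omega⟩ : Fin (i + (2 + (N - i - 2))))) = (⟨i, by omega⟩ : Fin N) := by
      ext; simp
    have ei1 : (Fin.cast (show N = i + (2 + (N - i - 2)) by omega).symm
        (⟨i + 1, by omega⟩ : Fin (i + (2 + (N - i - 2))))) = (⟨i + 1, by omega⟩ : Fin N) := by
      ext; simp
    rw [ei, ei1, hS])]
  rw [map_sum]
  refine Finset.sum_congr rfl (fun p hp => ?_)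
  rw [castPow_tprod]
  exact congrArg (⇑(PiTensorProduct.tprod K)) (funext fun j => by
    simp only [upd2, Fin.coe_cast]
    split_ifs with h1 h2
    · rfl
    · rfl
    · exact congrArg f (by ext; simp))
end Aux2
section Aux3
variable {K V : Type*} [Field K] [AddCommGroup V] [Module K V]
open PiTensorProduct

noncomputable def prepOne (K V : Type*) [Field K] [AddCommGroup V] [Module K V]
    (M : ℕ) (u : V) : (⨂[K] _ : Fin M, V) →ₗ[K] ⨂[K] _ : Fin (M + 1), V :=
  (castPow K V (show 1 + M = M + 1 by omega)).toLinearMap ∘ₗ (mulPow K V 1 M).toLinearMap ∘ₗ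
    TensorProduct.mk K _ _ ((oneEquiv K V).symm u)

noncomputable def appOne (K V : Type*) [Field K] [AddCommGroup V] [Module K V]
    (M : ℕ) (w : V) : (⨂[K] _ : Fin M, V) →ₗ[K] ⨂[K] _ : Fin (M + 1), V :=
  (mulPow K V M 1).toLinearMap ∘ₗ (TensorProduct.mk K _ _).flip ((oneEquiv K V).symm w)

lemma prepOne_tprod (M : ℕ) (u : V) (f : Fin M → V) :
    prepOne K V M u (tprod K f) = PiTensorProduct.tprod K (Fin.cons u f) := by
  simp only [prepOne, LinearMap.coe_comp, Function.comp_apply, LinearEquiv.coe_coe,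
    TensorProduct.mk_apply, oneEquiv_symm_apply, mulPow_tprod, castPow_tprod]
  refine congrArg (⇑(PiTensorProduct.tprod K)) (funext fun j => ?_)
  refine Fin.cases ?_ (fun i => ?_) j
  · have h0 : (Fin.cast (show M + 1 = 1 + M by omega) (0 : Fin (M + 1)))
        = Fin.castAdd M (0 : Fin 1) := by ext; simp
    rw [h0, finSumFinEquiv_symm_apply_castAdd]; simp
  · have hs : (Fin.cast (show M + 1 = 1 + M by omega) i.succ) = Fin.natAdd 1 i := by ext; simp; omega
    rw [hs, finSumFinEquiv_symm_apply_natAdd]; simp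

lemma appOne_tprod (M : ℕ) (w : V) (f : Fin M → V) :
    appOne K V M w (tprod K f) = PiTensorProduct.tprod K (Fin.snoc f w) := by
  simp only [appOne, LinearMap.coe_comp, Function.comp_apply, LinearEquiv.coe_coe,
    LinearMap.flip_apply, TensorProduct.mk_apply, oneEquiv_symm_apply, mulPow_tprod]
  refine congrArg (⇑(PiTensorProduct.tprod K)) (funext fun j => ?_)
  refine Fin.lastCases ?_ (fun i => ?_) j
  · have hl : (Fin.last M) = Fin.natAdd M (0 : Fin 1) := by ext; simp
    rw [hl, finSumFinEquiv_symm_apply_natAdd]; simp; rw [← hl, Fin.snoc_last]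
  · have hc : (Fin.castSucc i) = Fin.castAdd 1 i := by ext; simp
    rw [hc, finSumFinEquiv_symm_apply_castAdd]; simp; rw [← hc, Fin.snoc_castSucc]

lemma TOp_prepOne (R : V ⊗[K] V →ₗ[K] V ⊗[K] V) {M : ℕ} (i : ℕ) (u : V) (h : i + 2 ≤ M) :
    TOp K V R (M + 1) (i + 1) ∘ₗ prepOne K V M u = prepOne K V M u ∘ₗ TOp K V R M i := by
  refine PiTensorProduct.ext (MultilinearMap.ext fun f => ?_)
  simp only [LinearMap.compMultilinearMap_apply, LinearMap.coe_comp, Function.comp_apply]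
  obtain ⟨S, hS⟩ := TensorProduct.exists_finset (R (f ⟨i, by omega⟩ ⊗ₜ[K] f ⟨i + 1, by omega⟩))
  rw [prepOne_tprod, TOp_tprod R (i + 1) (by omega) _ S (by
    have h1 : (⟨i + 1, by omega⟩ : Fin (M + 1)) = Fin.succ ⟨i, by omega⟩ := by ext; simp
    have h2 : (⟨i + 1 + 1, by omega⟩ : Fin (M + 1)) = Fin.succ ⟨i + 1, by omega⟩ := by ext; simp
    rw [h1, h2, Fin.cons_succ, Fin.cons_succ, hS])]
  rw [TOp_tprod R i h f S hS, map_sum]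
  refine Finset.sum_congr rfl (fun p hp => ?_)
  rw [prepOne_tprod]
  refine congrArg (⇑(PiTensorProduct.tprod K)) (funext fun j => ?_)
  refine Fin.cases ?_ (fun k => ?_) j
  · simp only [upd2, Fin.cons_zero, Fin.val_zero]
    rw [if_neg (by omega), if_neg (by omega)]
  · simp only [upd2, Fin.cons_succ, Fin.val_succ]
    split_ifs <;> first | rfl | omega

lemma TOp_appOne (R : V ⊗[K] V →ₗ[K] V ⊗[K] V) {M : ℕ} (i : ℕ) (w : V) (h : i + 2 ≤ M) :
    TOp K V R (M + 1) i ∘ₗ appOne K V M w = appOne K V M w ∘ₗ TOp K V R M i := by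
  refine PiTensorProduct.ext (MultilinearMap.ext fun f => ?_)
  simp only [LinearMap.compMultilinearMap_apply, LinearMap.coe_comp, Function.comp_apply]
  obtain ⟨S, hS⟩ := TensorProduct.exists_finset (R (f ⟨i, by omega⟩ ⊗ₜ[K] f ⟨i + 1, by omega⟩))
  rw [appOne_tprod, TOp_tprod R i (by omega) _ S (by
    have h1 : (⟨i, by omega⟩ : Fin (M + 1)) = Fin.castSucc ⟨i, by omega⟩ := by ext; simp
    have h2 : (⟨i + 1, by omega⟩ : Fin (M + 1)) = Fin.castSucc ⟨i + 1, by omega⟩ := by ext; simp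
    rw [h1, h2, Fin.snoc_castSucc, Fin.snoc_castSucc, hS])]
  rw [TOp_tprod R i h f S hS, map_sum]
  refine Finset.sum_congr rfl (fun p hp => ?_)
  rw [appOne_tprod]
  refine congrArg (⇑(PiTensorProduct.tprod K)) (funext fun j => ?_)
  refine Fin.lastCases ?_ (fun k => ?_) j
  · simp only [upd2, Fin.snoc_last, Fin.val_last]
    rw [if_neg (by omega), if_neg (by omega)]
  · simp only [upd2, Fin.snoc_castSucc, Fin.coe_castSucc]

lemma TOp_comm (R : V ⊗[K] V →ₗ[K] V ⊗[K] V) {N i j : ℕ} (hij : i + 2 ≤ j) (hj : j + 2 ≤ N) :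
    TOp K V R N i * TOp K V R N j = TOp K V R N j * TOp K V R N i := by
  refine PiTensorProduct.ext (MultilinearMap.ext fun f => ?_)
  simp only [LinearMap.compMultilinearMap_apply, Module.End.mul_apply]
  obtain ⟨Si, hSi⟩ := TensorProduct.exists_finset (R (f ⟨i, by omega⟩ ⊗ₜ[K] f ⟨i + 1, by omega⟩))
  obtain ⟨Sj, hSj⟩ := TensorProduct.exists_finset (R (f ⟨j, by omega⟩ ⊗ₜ[K] f ⟨j + 1, by omega⟩))
  rw [TOp_tprod R j hj f Sj hSj, TOp_tprod R i (by omega) f Si hSi, map_sum, map_sum]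
  have L : ∀ q ∈ Sj, TOp K V R N i (tprod K (upd2 f j q.1 q.2))
      = ∑ p ∈ Si, tprod K (upd2 (upd2 f j q.1 q.2) i p.1 p.2) := by
    intro q hq
    refine TOp_tprod R i (by omega) _ Si ?_
    have e1 : upd2 f j q.1 q.2 ⟨i, by omega⟩ = f ⟨i, by omega⟩ := by
      simp only [upd2]; rw [if_neg (by omega), if_neg (by omega)]
    have e2 : upd2 f j q.1 q.2 ⟨i + 1, by omega⟩ = f ⟨i + 1, by omega⟩ := by
      simp only [upd2]; rw [if_neg (by omega), if_neg (by omega)]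
    rw [e1, e2, hSi]
  have L' : ∀ p ∈ Si, TOp K V R N j (tprod K (upd2 f i p.1 p.2))
      = ∑ q ∈ Sj, tprod K (upd2 (upd2 f i p.1 p.2) j q.1 q.2) := by
    intro p hp
    refine TOp_tprod R j hj _ Sj ?_
    have e1 : upd2 f i p.1 p.2 ⟨j, by omega⟩ = f ⟨j, by omega⟩ := by
      simp only [upd2]; rw [if_neg (by omega), if_neg (by omega)]
    have e2 : upd2 f i p.1 p.2 ⟨j + 1, by omega⟩ = f ⟨j + 1, by omega⟩ := by
      simp only [upd2]; rw [if_neg (by omega), if_neg (by omega)]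
    rw [e1, e2, hSj]
  rw [Finset.sum_congr rfl L, Finset.sum_congr rfl L']
  rw [Finset.sum_comm]
  refine Finset.sum_congr rfl fun p hp => Finset.sum_congr rfl fun q hq => ?_
  refine congrArg (⇑(PiTensorProduct.tprod K)) (funext fun m => ?_)
  simp only [upd2]
  split_ifs <;> first | rfl | omega

lemma TOp_braid (R : V ⊗[K] V →ₗ[K] V ⊗[K] V)
    (hb : TOp K V R 3 0 * TOp K V R 3 1 * TOp K V R 3 0
      = TOp K V R 3 1 * TOp K V R 3 0 * TOp K V R 3 1) :
    ∀ N i, i + 3 ≤ N → TOp K V R N i * TOp K V R N (i + 1) * TOp K V R N i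
      = TOp K V R N (i + 1) * TOp K V R N i * TOp K V R N (i + 1) := by
  intro N
  induction N with
  | zero => exact fun i h => absurd h (by omega)
  | succ M IH =>
    intro i h
    have key : ∀ (A B : Module.End K (⨂[K] _ : Fin M, V))
        (A' B' : Module.End K (⨂[K] _ : Fin (M + 1), V)),
        (∀ u : V, A' ∘ₗ prepOne K V M u = prepOne K V M u ∘ₗ A) →
        (∀ u : V, B' ∘ₗ prepOne K V M u = prepOne K V M u ∘ₗ B) →
        A * B * A = B * A * B → A' * B' * A' = B' * A' * B' := by
      intro A B A' B' hA hB hAB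
      refine PiTensorProduct.ext (MultilinearMap.ext fun f => ?_)
      simp only [LinearMap.compMultilinearMap_apply, Module.End.mul_apply]
      have hf : tprod K f = prepOne K V M (f 0) (tprod K (Fin.tail f)) := by
        rw [prepOne_tprod, Fin.cons_self_tail]
      have hcompA := fun u x => LinearMap.congr_fun (hA u) x
      have hcompB := fun u x => LinearMap.congr_fun (hB u) x
      simp only [LinearMap.coe_comp, Function.comp_apply] at hcompA hcompB
      rw [hf, hcompA, hcompB, hcompA, hcompB, hcompA, hcompB]
      have := LinearMap.congr_fun hAB (tprod K (Fin.tail f))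
      simp only [Module.End.mul_apply] at this
      rw [this]
    match M, i, h with
    | M + 1, i + 1, h =>
      refine key (TOp K V R (M + 1) i) (TOp K V R (M + 1) (i + 1)) _ _
        (fun u => TOp_prepOne R i u (by omega)) (fun u => TOp_prepOne R (i + 1) u (by omega))
        (IH i (by omega))
    | 2, 0, _ => exact hb
    | M + 3, 0, h =>
      -- use appOne reduction
      have keyA : ∀ (A B : Module.End K (⨂[K] _ : Fin (M + 3), V))
          (A' B' : Module.End K (⨂[K] _ : Fin (M + 4), V)),
          (∀ w : V, A' ∘ₗ appOne K V (M + 3) w = appOne K V (M + 3) w ∘ₗ A) →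
          (∀ w : V, B' ∘ₗ appOne K V (M + 3) w = appOne K V (M + 3) w ∘ₗ B) →
          A * B * A = B * A * B → A' * B' * A' = B' * A' * B' := by
        intro A B A' B' hA hB hAB
        refine PiTensorProduct.ext (MultilinearMap.ext fun f => ?_)
        simp only [LinearMap.compMultilinearMap_apply, Module.End.mul_apply]
        have hf : tprod K f = appOne K V (M + 3) (f (Fin.last (M + 3))) (tprod K (Fin.init f)) := by
          rw [appOne_tprod, Fin.snoc_init_self]
        have hcompA := fun w x => LinearMap.congr_fun (hA w) x
        have hcompB := fun w x => LinearMap.congr_fun (hB w) x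
        simp only [LinearMap.coe_comp, Function.comp_apply] at hcompA hcompB
        rw [hf, hcompA, hcompB, hcompA, hcompB, hcompA, hcompB]
        have := LinearMap.congr_fun hAB (tprod K (Fin.init f))
        simp only [Module.End.mul_apply] at this
        rw [this]
      exact keyA (TOp K V R (M + 3) 0) (TOp K V R (M + 3) 1) _ _
        (fun w => TOp_appOne R 0 w (by omega)) (fun w => TOp_appOne R 1 w (by omega))
        (IH 0 (by omega))
end Aux3
section Aux4
variable {K V : Type*} [Field K] [AddCommGroup V] [Module K V]
open PiTensorProduct

noncomputable def chainOp (K V : Type*) [Field K] [AddCommGroup V] [Module K V]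
    (R : V ⊗[K] V →ₗ[K] V ⊗[K] V) (M s : ℕ) : ℕ → Module.End K (⨂[K] _ : Fin M, V)
  | 0 => 1
  | k + 1 => TOp K V R M (s + k) * chainOp K V R M s k

lemma TOp_congr (R : V ⊗[K] V →ₗ[K] V ⊗[K] V) (M : ℕ) {i j : ℕ} (h : i = j) :
    TOp K V R M i = TOp K V R M j := by rw [h]

lemma chain_peel (R : V ⊗[K] V →ₗ[K] V ⊗[K] V) (M k : ℕ) :
    ∀ m, chainOp K V R M (k + 1) m * TOp K V R M k = chainOp K V R M k (m + 1) := by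
  intro m
  induction m with
  | zero => simp [chainOp]
  | succ m IH =>
    show TOp K V R M (k + 1 + m) * chainOp K V R M (k + 1) m * TOp K V R M k = _
    rw [mul_assoc, IH]
    show _ = TOp K V R M (k + (m + 1)) * chainOp K V R M k (m + 1)
    rw [TOp_congr R M (show k + 1 + m = k + (m + 1) by omega)]

lemma chain_comm (R : V ⊗[K] V →ₗ[K] V ⊗[K] V) (M s j : ℕ) (hj : j + 2 ≤ M) :
    ∀ k, s + k + 1 ≤ j → TOp K V R M j * chainOp K V R M s k
      = chainOp K V R M s k * TOp K V R M j := by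
  intro k
  induction k with
  | zero => simp [chainOp]
  | succ k IH =>
    intro h
    show TOp K V R M j * (TOp K V R M (s + k) * chainOp K V R M s k) = _
    rw [← mul_assoc, ← TOp_comm R (show s + k + 2 ≤ j by omega) hj, mul_assoc, IH (by omega),
      ← mul_assoc]
    rfl

lemma chain_prep (R : V ⊗[K] V →ₗ[K] V ⊗[K] V) (M s : ℕ) (u : V) :
    ∀ k, s + k + 1 ≤ M → (chainOp K V R (M + 1) (s + 1) k : _) ∘ₗ prepOne K V M u
      = prepOne K V M u ∘ₗ chainOp K V R M s k := by
  intro k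
  induction k with
  | zero =>
    intro _
    rfl
  | succ k IH =>
    intro h
    show (TOp K V R (M + 1) (s + 1 + k) * chainOp K V R (M + 1) (s + 1) k) ∘ₗ _ = _
    rw [Module.End.mul_eq_comp, LinearMap.comp_assoc, IH (by omega), ← LinearMap.comp_assoc,
      TOp_congr R (M + 1) (show s + 1 + k = (s + k) + 1 by omega),
      TOp_prepOne R (s + k) u (by omega), LinearMap.comp_assoc]
    rfl

lemma chain_app (R : V ⊗[K] V →ₗ[K] V ⊗[K] V) (M s : ℕ) (w : V) :
    ∀ k, s + k + 1 ≤ M → (chainOp K V R (M + 1) s k : _) ∘ₗ appOne K V M w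
      = appOne K V M w ∘ₗ chainOp K V R M s k := by
  intro k
  induction k with
  | zero =>
    intro _
    rfl
  | succ k IH =>
    intro h
    show (TOp K V R (M + 1) (s + k) * chainOp K V R (M + 1) s k) ∘ₗ _ = _
    rw [Module.End.mul_eq_comp, LinearMap.comp_assoc, IH (by omega), ← LinearMap.comp_assoc,
      TOp_appOne R (s + k) w (by omega), LinearMap.comp_assoc]
    rfl

lemma word_key (R : V ⊗[K] V →ₗ[K] V ⊗[K] V)
    (hb : TOp K V R 3 0 * TOp K V R 3 1 * TOp K V R 3 0
      = TOp K V R 3 1 * TOp K V R 3 0 * TOp K V R 3 1)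
    (N : ℕ) : ∀ m, m + 3 ≤ N →
    chainOp K V R N 0 (m + 1) * chainOp K V R N 0 (m + 2)
      = TOp K V R N (m + 1) * (chainOp K V R N 0 (m + 1) * chainOp K V R N 1 (m + 1)) := by
  intro m
  induction m with
  | zero =>
    intro h
    show (TOp K V R N 0 * 1) * (TOp K V R N (0 + 1) * (TOp K V R N 0 * 1))
      = TOp K V R N 1 * ((TOp K V R N 0 * 1) * (TOp K V R N (1 + 0) * 1))
    have hbN := TOp_braid R hb N 0 h
    simp only [mul_one, one_mul]
    rw [TOp_congr R N (show 0 + 1 = 1 by omega), TOp_congr R N (show 1 + 0 = 1 by omega)]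
    simp only [← mul_assoc]
    rw [hbN]
  | succ m IH =>
    intro h
    have hcm : TOp K V R N (m + 2) * chainOp K V R N 0 (m + 1)
        = chainOp K V R N 0 (m + 1) * TOp K V R N (m + 2) :=
      chain_comm R N 0 (m + 2) (by omega) (m + 1) (by omega)
    have hbr : TOp K V R N (m + 1) * TOp K V R N (m + 2) * TOp K V R N (m + 1)
        = TOp K V R N (m + 2) * TOp K V R N (m + 1) * TOp K V R N (m + 2) := by
      have := TOp_braid R hb N (m + 1) (by omega)
      rwa [TOp_congr R N (show m + 1 + 1 = m + 2 by omega)] at this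
    -- C(m+2) = T(m+2) * C(m+1)
    have h1 : chainOp K V R N 0 (m + 3)
        = TOp K V R N (m + 2) * chainOp K V R N 0 (m + 2) := by
      show TOp K V R N (0 + (m + 2)) * _ = _
      rw [TOp_congr R N (show 0 + (m + 2) = m + 2 by omega)]
    have h2 : chainOp K V R N 0 (m + 2)
        = TOp K V R N (m + 1) * chainOp K V R N 0 (m + 1) := by
      show TOp K V R N (0 + (m + 1)) * _ = _
      rw [TOp_congr R N (show 0 + (m + 1) = m + 1 by omega)]
    have h3 : chainOp K V R N 1 (m + 2)
        = TOp K V R N (m + 2) * chainOp K V R N 1 (m + 1) := by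
      show TOp K V R N (1 + (m + 1)) * _ = _
      rw [TOp_congr R N (show 1 + (m + 1) = m + 2 by omega)]
    calc chainOp K V R N 0 (m + 2) * chainOp K V R N 0 (m + 3)
        = chainOp K V R N 0 (m + 2) * (TOp K V R N (m + 2) * chainOp K V R N 0 (m + 2)) := by
          rw [← h1]
      _ = TOp K V R N (m + 1) * chainOp K V R N 0 (m + 1) * TOp K V R N (m + 2)
            * chainOp K V R N 0 (m + 2) := by
          rw [h2]; simp only [mul_assoc]
      _ = TOp K V R N (m + 1) * TOp K V R N (m + 2) * chainOp K V R N 0 (m + 1)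
            * chainOp K V R N 0 (m + 2) := by
          rw [mul_assoc (TOp K V R N (m + 1)), ← hcm]; simp only [mul_assoc]
      _ = TOp K V R N (m + 1) * TOp K V R N (m + 2)
            * (TOp K V R N (m + 1) * (chainOp K V R N 0 (m + 1) * chainOp K V R N 1 (m + 1))) := by
          rw [mul_assoc, IH (by omega)]
      _ = TOp K V R N (m + 2) * TOp K V R N (m + 1) * TOp K V R N (m + 2)
            * (chainOp K V R N 0 (m + 1) * chainOp K V R N 1 (m + 1)) := by
          simp only [← mul_assoc]
          rw [hbr]
      _ = TOp K V R N (m + 2) * (chainOp K V R N 0 (m + 2) * chainOp K V R N 1 (m + 2)) := by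
          rw [h2, h3]
          simp only [← mul_assoc]
          congr 1
          simp only [mul_assoc]
          rw [← hcm]

end Aux4
section Aux5

lemma tau_apply (k x : ℕ) : tau k x = if x = k then k + 1 else if x = k + 1 then k else x := by
  simp [tau, Equiv.swap_apply_def]

lemma cyc_eq_prod (n k : ℕ) (hk : k ≤ n) :
    cyc n k = ((List.range (n - k)).map (fun t => tau (n - 1 - t))).prod := by
  rcases le_or_gt n k with h | h
  · rw [cyc, if_pos h]
    have h1 : n - k = 0 := by omega
    have h2 : k - n = 0 := by omega
    rw [h1, h2]
    simp
  · rw [cyc, if_neg (by omega)]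

lemma cyc_peel {n k : ℕ} (h : k < n) : cyc n k = cyc n (k + 1) * tau k := by
  rw [cyc_eq_prod n k (by omega), cyc_eq_prod n (k + 1) (by omega)]
  have h1 : n - k = (n - (k + 1)) + 1 := by omega
  rw [h1, List.range_succ, List.map_append, List.prod_append]
  simp only [List.map_cons, List.map_nil, List.prod_cons, List.prod_nil, mul_one]
  congr 1
  have : n - 1 - (n - (k + 1)) = k := by omega
  rw [this]

lemma cyc_apply {n : ℕ} : ∀ d k, k + d = n → ∀ x,
    cyc n k x = if x < k then x else if x = k then n else if x ≤ n then x - 1 else x := by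
  intro d
  induction d with
  | zero =>
    intro k hk x
    subst hk
    simp only [Nat.add_zero]
    rw [cyc_eq_prod k k le_rfl]
    simp only [Nat.sub_self, List.range_zero, List.map_nil, List.prod_nil]
    rw [Equiv.Perm.one_apply]
    split_ifs <;> omega
  | succ d IH =>
    intro k hk x
    have hlt : k < n := by omega
    rw [cyc_peel hlt, Equiv.Perm.mul_apply, tau_apply]
    by_cases h1 : x = k
    · rw [if_pos h1, IH (k + 1) (by omega) (k + 1)]
      rw [if_neg (by omega), if_pos rfl]
      split_ifs <;> omega
    · rw [if_neg h1]
      by_cases h2 : x = k + 1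
      · rw [if_pos h2, IH (k + 1) (by omega) k, if_pos (by omega)]
        split_ifs <;> omega
      · rw [if_neg h2, IH (k + 1) (by omega) x]
        split_ifs <;> omega

lemma cyc_fix {n k : ℕ} (hk : k ≤ n) {m : ℕ} (hm : n + 1 ≤ m) : cyc n k m = m := by
  rw [cyc_apply (n - k) k (by omega) m]
  split_ifs <;> omega

lemma tau_fix {k : ℕ} {m : ℕ} (hm : k + 2 ≤ m) : tau k m = m := by
  rw [tau_apply]
  split_ifs <;> omega

lemma invLen_cyc (n k : ℕ) (hk : k ≤ n) : invLen (n + 1) (cyc n k) = n - k := by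
  unfold invLen
  have hck := cyc_apply (n := n) (n - k) k (by omega)
  have heq : ((Finset.range (n + 1) ×ˢ Finset.range (n + 1)).filter
      (fun p => p.1 < p.2 ∧ cyc n k p.2 < cyc n k p.1)) = {k} ×ˢ Finset.Ioc k n := by
    ext p
    simp only [Finset.mem_filter, Finset.mem_product, Finset.mem_range, Finset.mem_singleton,
      Finset.mem_Ioc, hck]
    constructor
    · rintro ⟨⟨h1, h2⟩, h3, h4⟩
      split_ifs at h4 <;> omega
    · rintro ⟨h1, h2, h3⟩
      subst h1
      refine ⟨⟨by omega, by omega⟩, by omega, ?_⟩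
      split_ifs <;> omega
  rw [heq, Finset.card_product, Finset.card_singleton, Nat.card_Ioc, one_mul]

lemma invLen_tau (n k : ℕ) (hk : k < n) : invLen (n + 1) (tau k) = 1 := by
  unfold invLen
  have heq : ((Finset.range (n + 1) ×ˢ Finset.range (n + 1)).filter
      (fun p => p.1 < p.2 ∧ tau k p.2 < tau k p.1)) = {(k, k + 1)} := by
    ext p
    simp only [Finset.mem_filter, Finset.mem_product, Finset.mem_range, Finset.mem_singleton,
      tau_apply, Prod.ext_iff]
    constructor
    · rintro ⟨⟨h1, h2⟩, h3, h4⟩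
      split_ifs at h4 <;> omega
    · rintro ⟨h1, h2⟩
      refine ⟨⟨by omega, by omega⟩, by omega, ?_⟩
      split_ifs <;> omega
  rw [heq, Finset.card_singleton]

end Aux5
section Aux6
variable {K V : Type*} [Field K] [AddCommGroup V] [Module K V]
open PiTensorProduct

lemma prep_app_swap (M : ℕ) (u w : V) :
    (prepOne K V (M + 1) u) ∘ₗ (appOne K V M w) = (appOne K V (M + 1) w) ∘ₗ (prepOne K V M u) := by
  refine PiTensorProduct.ext (MultilinearMap.ext fun f => ?_)
  simp only [LinearMap.compMultilinearMap_apply, LinearMap.coe_comp, Function.comp_apply]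
  rw [appOne_tprod, prepOne_tprod, prepOne_tprod, appOne_tprod, Fin.cons_snoc_eq_snoc_cons]

lemma TOp_prep2 (R : V ⊗[K] V →ₗ[K] V ⊗[K] V) (M : ℕ) (u v : V) (S : Finset (V × V))
    (hS : R (u ⊗ₜ[K] v) = ∑ p ∈ S, p.1 ⊗ₜ[K] p.2) (s : ⨂[K] _ : Fin M, V) :
    TOp K V R (M + 1 + 1) 0 (prepOne K V (M + 1) u (prepOne K V M v s))
      = ∑ p ∈ S, prepOne K V (M + 1) p.1 (prepOne K V M p.2 s) := by
  induction s using PiTensorProduct.induction_on with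
  | smul_tprod r f =>
    simp only [map_smul]
    rw [← Finset.smul_sum]
    congr 1
    rw [prepOne_tprod, prepOne_tprod]
    have hS2 : R ((Fin.cons u (Fin.cons v f) : Fin (M + 1 + 1) → V) ⟨0, by omega⟩ ⊗ₜ[K]
        (Fin.cons u (Fin.cons v f) : Fin (M + 1 + 1) → V) ⟨0 + 1, by omega⟩)
        = ∑ p ∈ S, p.1 ⊗ₜ[K] p.2 := by
      have e0 : ((⟨0, by omega⟩ : Fin (M + 1 + 1))) = 0 := by ext; simp
      have e1 : ((⟨0 + 1, by omega⟩ : Fin (M + 1 + 1))) = Fin.succ 0 := by ext; simp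
      rw [e0, e1, Fin.cons_zero, Fin.cons_succ, Fin.cons_zero, hS]
    have hT := @TOp_tprod K V _ _ _ (M + 1 + 1) R 0 (by omega) (Fin.cons u (Fin.cons v f)) S hS2
    rw [hT]
    refine Finset.sum_congr rfl fun p hp => ?_
    rw [prepOne_tprod, prepOne_tprod]
    refine congrArg (⇑(PiTensorProduct.tprod K)) (funext fun j => ?_)
    refine Fin.cases ?_ (fun k => ?_) j
    · simp [upd2]
    · refine Fin.cases ?_ (fun k' => ?_) k
      · simp [upd2]
      · simp only [upd2, Fin.cons_succ, Fin.val_succ]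
        rw [if_neg (by omega), if_neg (by omega)]
  | add x y hx hy => simp only [map_add, hx, hy, Finset.sum_add_distrib]

lemma TOp_app2 (R : V ⊗[K] V →ₗ[K] V ⊗[K] V) (M : ℕ) (x y : V) (S : Finset (V × V))
    (hS : R (x ⊗ₜ[K] y) = ∑ p ∈ S, p.1 ⊗ₜ[K] p.2) (s : ⨂[K] _ : Fin M, V) :
    TOp K V R (M + 1 + 1) M (appOne K V (M + 1) y (appOne K V M x s))
      = ∑ p ∈ S, appOne K V (M + 1) p.2 (appOne K V M p.1 s) := by
  induction s using PiTensorProduct.induction_on with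
  | smul_tprod r f =>
    simp only [map_smul]
    rw [← Finset.smul_sum]
    congr 1
    rw [appOne_tprod, appOne_tprod]
    have hS2 : R ((Fin.snoc (Fin.snoc f x) y : Fin (M + 1 + 1) → V) ⟨M, by omega⟩ ⊗ₜ[K]
        (Fin.snoc (Fin.snoc f x) y : Fin (M + 1 + 1) → V) ⟨M + 1, by omega⟩)
        = ∑ p ∈ S, p.1 ⊗ₜ[K] p.2 := by
      have e0 : ((⟨M, by omega⟩ : Fin (M + 1 + 1))) = Fin.castSucc (Fin.last M) := by ext; simp
      have e1 : ((⟨M + 1, by omega⟩ : Fin (M + 1 + 1))) = Fin.last (M + 1) := by ext; simp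
      rw [e0, e1, Fin.snoc_castSucc, Fin.snoc_last, Fin.snoc_last, hS]
    have hT := @TOp_tprod K V _ _ _ (M + 1 + 1) R M (by omega) (Fin.snoc (Fin.snoc f x) y) S hS2
    rw [hT]
    refine Finset.sum_congr rfl fun p hp => ?_
    rw [appOne_tprod, appOne_tprod]
    refine congrArg (⇑(PiTensorProduct.tprod K)) (funext fun j => ?_)
    refine Fin.lastCases ?_ (fun k => ?_) j
    · simp only [upd2, Fin.val_last, Fin.snoc_last]
      rw [if_neg (by omega)]; simp
    · refine Fin.lastCases ?_ (fun k' => ?_) k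
      · simp only [upd2, Fin.coe_castSucc, Fin.val_last, Fin.snoc_castSucc, Fin.snoc_last]
        simp
      · simp only [upd2, Fin.coe_castSucc, Fin.snoc_castSucc]
        rw [if_neg (by omega), if_neg (by omega)]
  | add a b ha hb => simp only [map_add, ha, hb, Finset.sum_add_distrib]

lemma app2_eq_mulPow (M : ℕ) (x y : V) (s : ⨂[K] _ : Fin M, V) :
    appOne K V (M + 1) y (appOne K V M x s)
      = mulPow K V M 2 (s ⊗ₜ[K] (pairEquiv K V).symm (x ⊗ₜ[K] y)) := by
  induction s using PiTensorProduct.induction_on with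
  | smul_tprod r f =>
    simp only [map_smul, ← TensorProduct.smul_tmul', map_smul]
    congr 1
    rw [appOne_tprod, appOne_tprod, pairEquiv_symm_tmul, mulPow_tprod]
    refine congrArg (⇑(PiTensorProduct.tprod K)) (funext fun j => ?_)
    refine Fin.addCases (m := M) (n := 2) (fun j' => ?_) (fun j'' => ?_) j
    · rw [finSumFinEquiv_symm_apply_castAdd]
      have e : (Fin.castAdd 2 j' : Fin (M + 2)) = Fin.castSucc (Fin.castSucc j') := by ext; simp
      rw [e, Fin.snoc_castSucc, Fin.snoc_castSucc]
      rfl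
    · rw [finSumFinEquiv_symm_apply_natAdd]
      refine Fin.cases ?_ (fun j3 => ?_) j''
      · have e : (Fin.natAdd M (0 : Fin 2) : Fin (M + 2)) = Fin.castSucc (Fin.last M) := by
          ext; simp
        rw [e, Fin.snoc_castSucc, Fin.snoc_last]
        rfl
      · have e : (Fin.natAdd M j3.succ : Fin (M + 2)) = Fin.last (M + 1) := by
          ext; simp; try omega
        rw [e, Fin.snoc_last]
        have : j3 = 0 := Subsingleton.elim _ _
        subst this
        rfl
  | add a b ha hb =>
    simp only [map_add, TensorProduct.add_tmul, map_add, ha, hb]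

lemma tmul_left_inj {A B : Type*} [AddCommGroup A] [Module K A] [AddCommGroup B] [Module K B]
    {t : A} (ht : t ≠ 0) {z1 z2 : B} (h : t ⊗ₜ[K] z1 = t ⊗ₜ[K] z2) : z1 = z2 := by
  obtain ⟨φ, hφ⟩ : ∃ φ : Module.Dual K A, φ t ≠ 0 := by
    by_contra hc
    push_neg at hc
    exact ht ((Module.forall_dual_apply_eq_zero_iff K t).mp fun φ => hc φ)
  have h2 := congrArg (fun w => TensorProduct.lid K B (TensorProduct.map φ LinearMap.id w)) h
  simp only [TensorProduct.map_tmul, LinearMap.id_apply, TensorProduct.lid_tmul] at h2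
  exact smul_right_injective B hφ h2

end Aux6
section Aux7
variable {K V : Type*} [Field K] [AddCommGroup V] [Module K V]

lemma mur_tmul (x y : V) : mur K V (x ⊗ₜ[K] y) = TensorAlgebra.ι K x * TensorAlgebra.ι K y := by
  simp [mur]

lemma thmap_mur (θL : V →ₗ[K] V) (z : V ⊗[K] V) :
    TensorAlgebra.lift K ((TensorAlgebra.ι K).comp θL) (mur K V z)
      = mur K V (TensorProduct.map θL θL z) := by
  induction z using TensorProduct.induction_on with
  | zero => simp
  | tmul x y => simp [mur_tmul, TensorAlgebra.lift_ι_apply]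
  | add a b ha hb => simp [map_add, ha, hb]

end Aux7
/-- Under the hypotheses `dim Υ^{(n)} = 1` and `Υ^{(n+1)} = 0`, the operator `θ ⊗ θ`
commutes with the Hecke symmetry `R`; consequently `θ` extends to (graded) algebra
automorphisms of `Λ(V,R)` and `S(V,R)`. -/
theorem stmt13 {K V : Type*} [Field K] [AddCommGroup V] [Module K V]
    [FiniteDimensional K V]
    (R : V ⊗[K] V →ₗ[K] V ⊗[K] V) (q : K) (hq : q ≠ 0)
    (hHecke : (R - q • LinearMap.id) ∘ₗ (R + LinearMap.id) = 0)
    (hbraid : TOp K V R 3 0 * TOp K V R 3 1 * TOp K V R 3 0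
      = TOp K V R 3 1 * TOp K V R 3 0 * TOp K V R 3 1)
    (n : ℕ) (hn : 0 < n)
    (h1 : Module.finrank K (Ups K V R q n) = 1)
    (h0 : Ups K V R q (n + 1) = ⊥)
    (t : ⨂[K] _ : Fin n, V) (ht : t ∈ Ups K V R q n) (ht0 : t ≠ 0)
    (Tact : Equiv.Perm ℕ → Module.End K (⨂[K] _ : Fin (n + 1), V))
    (hTact1 : Tact 1 = 1)
    (hTactGen : ∀ i : ℕ, i + 2 ≤ n + 1 → Tact (tau i) = TOp K V R (n + 1) i)
    (hTactMul : ∀ π σ : Equiv.Perm ℕ,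
      (∀ m, n + 1 ≤ m → π m = m) → (∀ m, n + 1 ≤ m → σ m = m) →
      invLen (n + 1) (π * σ) = invLen (n + 1) π + invLen (n + 1) σ →
        Tact (π * σ) = Tact π * Tact σ)
    (θ : V ≃ₗ[K] V)
    (hθ : ∀ v : V,
      Tact (cyc n 0) ((castPow K V (show 1 + n = n + 1 by omega))
          ((mulPow K V 1 n) (((oneEquiv K V).symm v) ⊗ₜ[K] t)))
        = (mulPow K V n 1) (t ⊗ₜ[K] ((oneEquiv K V).symm (θ v)))) :
    TensorProduct.map θ.toLinearMap θ.toLinearMap ∘ₗ R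
        = R ∘ₗ TensorProduct.map θ.toLinearMap θ.toLinearMap ∧
    (∃ f : RingQuot (relS K V R q) ≃ₐ[K] RingQuot (relS K V R q),
      ∀ v : V, f (RingQuot.mkAlgHom K (relS K V R q) (TensorAlgebra.ι K v))
        = RingQuot.mkAlgHom K (relS K V R q) (TensorAlgebra.ι K (θ v))) ∧
    (∃ g : RingQuot (relL K V R q) ≃ₐ[K] RingQuot (relL K V R q),
      ∀ v : V, g (RingQuot.mkAlgHom K (relL K V R q) (TensorAlgebra.ι K v))
        = RingQuot.mkAlgHom K (relL K V R q) (TensorAlgebra.ι K (θ v))) := by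
  classical
  -- Step 1: Tact of cyc is a chain of TOps
  have hTc : ∀ d k, k + d = n → Tact (cyc n k) = chainOp K V R (n + 1) k d := by
    intro d
    induction d with
    | zero =>
      intro k hk
      have hcyc1 : cyc n k = 1 := by
        rw [cyc_eq_prod n k (by omega)]
        have : n - k = 0 := by omega
        rw [this]
        simp
      rw [hcyc1, hTact1]
      rfl
    | succ d IH =>
      intro k hk
      have hklt : k < n := by omega
      rw [cyc_peel hklt]
      rw [hTactMul _ _ (fun m hm => cyc_fix (by omega) hm) (fun m hm => tau_fix (by omega))
        (by
          rw [← cyc_peel hklt, invLen_cyc n k (by omega), invLen_cyc n (k + 1) (by omega),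
            invLen_tau n k hklt]
          omega)]
      rw [IH (k + 1) (by omega), hTactGen k (by omega)]
      exact chain_peel R (n + 1) k d
  -- Step 2: the defining property of θ in prep/app form
  have hθ' : ∀ v : V, chainOp K V R (n + 1) 0 n (prepOne K V n v t) = appOne K V n (θ v) t := by
    intro v
    have h := hθ v
    rw [hTc n 0 (by omega)] at h
    exact h
  -- Step 3: intertwining of chains with insertions
  have hB : ∀ (u : V) (x : ⨂[K] _ : Fin (n + 1), V),
      chainOp K V R (n + 2) 1 n (prepOne K V (n + 1) u x)
        = prepOne K V (n + 1) u (chainOp K V R (n + 1) 0 n x) := by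
    intro u x
    exact LinearMap.congr_fun (chain_prep R (n + 1) 0 u n (by omega)) x
  have hA : ∀ (w : V) (x : ⨂[K] _ : Fin (n + 1), V),
      chainOp K V R (n + 2) 0 n (appOne K V (n + 1) w x)
        = appOne K V (n + 1) w (chainOp K V R (n + 1) 0 n x) := by
    intro w x
    exact LinearMap.congr_fun (chain_app R (n + 1) 0 w n (by omega)) x
  -- Step 4: evaluation of the operator P = A ∘ B on u ⊗ v ⊗ t
  have hP : ∀ u v : V,
      chainOp K V R (n + 2) 0 n (chainOp K V R (n + 2) 1 n
        (prepOne K V (n + 1) u (prepOne K V n v t)))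
      = appOne K V (n + 1) (θ v) (appOne K V n (θ u) t) := by
    intro u v
    rw [hB, hθ']
    have hswap := LinearMap.congr_fun (prep_app_swap (K := K) (V := V) n u (θ v)) t
    simp only [LinearMap.coe_comp, Function.comp_apply] at hswap
    rw [hswap, hA, hθ']
  -- Step 5: word identity P T₀ = Tₙ P
  have hw' : chainOp K V R (n + 2) 0 n * chainOp K V R (n + 2) 0 (n + 1)
      = TOp K V R (n + 2) n * (chainOp K V R (n + 2) 0 n * chainOp K V R (n + 2) 1 n) := by
    obtain ⟨m, rfl⟩ : ∃ m, n = m + 1 := ⟨n - 1, by omega⟩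
    exact word_key R hbraid (m + 1 + 2) m (by omega)
  have hword : ∀ z : ⨂[K] _ : Fin (n + 2), V,
      chainOp K V R (n + 2) 0 n (chainOp K V R (n + 2) 1 n (TOp K V R (n + 2) 0 z))
        = TOp K V R (n + 2) n (chainOp K V R (n + 2) 0 n (chainOp K V R (n + 2) 1 n z)) := by
    intro z
    have h1 : chainOp K V R (n + 2) 1 n (TOp K V R (n + 2) 0 z)
        = chainOp K V R (n + 2) 0 (n + 1) z := by
      rw [← Module.End.mul_apply]
      exact LinearMap.congr_fun (chain_peel R (n + 2) 0 n) z
    rw [h1, ← Module.End.mul_apply, hw']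
    simp only [Module.End.mul_apply]
  -- Step 6: the commutation relation on pure tensors
  have hcomm : ∀ u v : V,
      TensorProduct.map θ.toLinearMap θ.toLinearMap (R (u ⊗ₜ[K] v)) = R (θ u ⊗ₜ[K] θ v) := by
    intro u v
    obtain ⟨S, hS⟩ := TensorProduct.exists_finset (R (u ⊗ₜ[K] v))
    obtain ⟨S', hS'⟩ := TensorProduct.exists_finset (R (θ u ⊗ₜ[K] θ v))
    have i1 : TOp K V R (n + 2) 0 (prepOne K V (n + 1) u (prepOne K V n v t))
        = ∑ p ∈ S, prepOne K V (n + 1) p.1 (prepOne K V n p.2 t) :=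
      TOp_prep2 R n u v S hS t
    have E1 : chainOp K V R (n + 2) 0 n (chainOp K V R (n + 2) 1 n
        (TOp K V R (n + 2) 0 (prepOne K V (n + 1) u (prepOne K V n v t))))
        = ∑ p ∈ S, appOne K V (n + 1) (θ p.2) (appOne K V n (θ p.1) t) := by
      rw [i1, map_sum, map_sum]
      exact Finset.sum_congr rfl fun p _ => hP p.1 p.2
    have E2 : TOp K V R (n + 2) n (chainOp K V R (n + 2) 0 n (chainOp K V R (n + 2) 1 n
        (prepOne K V (n + 1) u (prepOne K V n v t))))
        = ∑ p ∈ S', appOne K V (n + 1) p.2 (appOne K V n p.1 t) := by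
      rw [hP u v]
      exact TOp_app2 R n (θ u) (θ v) S' hS' t
    have E3 := hword (prepOne K V (n + 1) u (prepOne K V n v t))
    have SUMEQ : (∑ p ∈ S, appOne K V (n + 1) (θ p.2) (appOne K V n (θ p.1) t))
        = ∑ p ∈ S', appOne K V (n + 1) p.2 (appOne K V n p.1 t) :=
      E1.symm.trans (E3.trans E2)
    have key : mulPow K V n 2 (t ⊗ₜ[K] (pairEquiv K V).symm
          (TensorProduct.map θ.toLinearMap θ.toLinearMap (R (u ⊗ₜ[K] v))))
        = mulPow K V n 2 (t ⊗ₜ[K] (pairEquiv K V).symm (R (θ u ⊗ₜ[K] θ v))) := by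
      rw [hS, hS']
      simp only [map_sum, TensorProduct.tmul_sum]
      calc (∑ p ∈ S, mulPow K V n 2 (t ⊗ₜ[K] (pairEquiv K V).symm
              (TensorProduct.map θ.toLinearMap θ.toLinearMap (p.1 ⊗ₜ[K] p.2))))
          = ∑ p ∈ S, appOne K V (n + 1) (θ p.2) (appOne K V n (θ p.1) t) := by
            refine Finset.sum_congr rfl fun p _ => ?_
            rw [TensorProduct.map_tmul]
            have := (app2_eq_mulPow n (θ p.1) (θ p.2) t).symm
            simp only [LinearEquiv.coe_coe] at this ⊢
            exact this
        _ = ∑ p ∈ S', appOne K V (n + 1) p.2 (appOne K V n p.1 t) := SUMEQ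
        _ = ∑ p ∈ S', mulPow K V n 2 (t ⊗ₜ[K] (pairEquiv K V).symm (p.1 ⊗ₜ[K] p.2)) :=
            Finset.sum_congr rfl fun p _ => app2_eq_mulPow n p.1 p.2 t
    have h2 := (mulPow K V n 2).injective key
    have h3 := tmul_left_inj ht0 h2
    exact (pairEquiv K V).symm.injective h3
  have hRθ : TensorProduct.map θ.toLinearMap θ.toLinearMap ∘ₗ R
      = R ∘ₗ TensorProduct.map θ.toLinearMap θ.toLinearMap := by
    refine TensorProduct.ext' fun u v => ?_
    simp only [LinearMap.coe_comp, Function.comp_apply, TensorProduct.map_tmul,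
      LinearEquiv.coe_coe]
    exact hcomm u v
  -- commutation with R - q·id, for θ and θ⁻¹
  have hcommL : ∀ w : V ⊗[K] V,
      TensorProduct.map θ.toLinearMap θ.toLinearMap
          ((R - q • (LinearMap.id : V ⊗[K] V →ₗ[K] V ⊗[K] V)) w)
        = (R - q • (LinearMap.id : V ⊗[K] V →ₗ[K] V ⊗[K] V))
            (TensorProduct.map θ.toLinearMap θ.toLinearMap w) := by
    intro w
    have h := LinearMap.congr_fun hRθ w
    simp only [LinearMap.coe_comp, Function.comp_apply] at h
    simp only [LinearMap.sub_apply, LinearMap.smul_apply, LinearMap.id_apply, map_sub, map_smul, h]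
  have hid1 : ∀ z : V ⊗[K] V,
      TensorProduct.map θ.toLinearMap θ.toLinearMap
        (TensorProduct.map θ.symm.toLinearMap θ.symm.toLinearMap z) = z := by
    intro z
    induction z using TensorProduct.induction_on with
    | zero => simp
    | tmul x y => simp
    | add a b ha hb => rw [map_add, map_add, ha, hb]
  have hid2 : ∀ z : V ⊗[K] V,
      TensorProduct.map θ.symm.toLinearMap θ.symm.toLinearMap
        (TensorProduct.map θ.toLinearMap θ.toLinearMap z) = z := by
    intro z
    induction z using TensorProduct.induction_on with
    | zero => simp
    | tmul x y => simp
    | add a b ha hb => rw [map_add, map_add, ha, hb]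
  have hcommL' : ∀ w : V ⊗[K] V,
      TensorProduct.map θ.symm.toLinearMap θ.symm.toLinearMap
          ((R - q • (LinearMap.id : V ⊗[K] V →ₗ[K] V ⊗[K] V)) w)
        = (R - q • (LinearMap.id : V ⊗[K] V →ₗ[K] V ⊗[K] V))
            (TensorProduct.map θ.symm.toLinearMap θ.symm.toLinearMap w) := by
    intro w
    have h := hcommL (TensorProduct.map θ.symm.toLinearMap θ.symm.toLinearMap w)
    rw [hid1] at h
    have h2 := congrArg (TensorProduct.map θ.symm.toLinearMap θ.symm.toLinearMap) h
    rw [hid2] at h2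
    exact h2.symm
  -- algebra endomorphisms induced by θ and θ⁻¹
  have hθmι : ∀ v : V,
      TensorAlgebra.lift K ((TensorAlgebra.ι K).comp θ.toLinearMap) (TensorAlgebra.ι K v)
        = TensorAlgebra.ι K (θ v) := by
    intro v
    rw [TensorAlgebra.lift_ι_apply]
    rfl
  have hθm'ι : ∀ v : V,
      TensorAlgebra.lift K ((TensorAlgebra.ι K).comp θ.symm.toLinearMap) (TensorAlgebra.ι K v)
        = TensorAlgebra.ι K (θ.symm v) := by
    intro v
    rw [TensorAlgebra.lift_ι_apply]
    rfl
  refine ⟨hRθ, ?_, ?_⟩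
  · -- S(V,R)
    have hrel : ∀ ⦃x y⦄, relS K V R q x y →
        (RingQuot.mkAlgHom K (relS K V R q)).comp
          (TensorAlgebra.lift K ((TensorAlgebra.ι K).comp θ.toLinearMap)) x
        = (RingQuot.mkAlgHom K (relS K V R q)).comp
          (TensorAlgebra.lift K ((TensorAlgebra.ι K).comp θ.toLinearMap)) y := by
      rintro x y ⟨hy, w, hx⟩
      subst hy hx
      simp only [AlgHom.comp_apply, map_zero]
      rw [thmap_mur, hcommL w]
      have hr := RingQuot.mkAlgHom_rel K (s := relS K V R q)
        (x := mur K V ((R - q • (LinearMap.id : V ⊗[K] V →ₗ[K] V ⊗[K] V))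
          (TensorProduct.map θ.toLinearMap θ.toLinearMap w))) (y := 0)
        ⟨rfl, TensorProduct.map θ.toLinearMap θ.toLinearMap w, rfl⟩
      rw [map_zero] at hr
      exact hr
    have hrel' : ∀ ⦃x y⦄, relS K V R q x y →
        (RingQuot.mkAlgHom K (relS K V R q)).comp
          (TensorAlgebra.lift K ((TensorAlgebra.ι K).comp θ.symm.toLinearMap)) x
        = (RingQuot.mkAlgHom K (relS K V R q)).comp
          (TensorAlgebra.lift K ((TensorAlgebra.ι K).comp θ.symm.toLinearMap)) y := by
      rintro x y ⟨hy, w, hx⟩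
      subst hy hx
      simp only [AlgHom.comp_apply, map_zero]
      rw [thmap_mur, hcommL' w]
      have hr := RingQuot.mkAlgHom_rel K (s := relS K V R q)
        (x := mur K V ((R - q • (LinearMap.id : V ⊗[K] V →ₗ[K] V ⊗[K] V))
          (TensorProduct.map θ.symm.toLinearMap θ.symm.toLinearMap w))) (y := 0)
        ⟨rfl, TensorProduct.map θ.symm.toLinearMap θ.symm.toLinearMap w, rfl⟩
      rw [map_zero] at hr
      exact hr
    set f1 := RingQuot.liftAlgHom K ⟨(RingQuot.mkAlgHom K (relS K V R q)).comp
      (TensorAlgebra.lift K ((TensorAlgebra.ι K).comp θ.toLinearMap)), hrel⟩ with hf1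
    set f2 := RingQuot.liftAlgHom K ⟨(RingQuot.mkAlgHom K (relS K V R q)).comp
      (TensorAlgebra.lift K ((TensorAlgebra.ι K).comp θ.symm.toLinearMap)), hrel'⟩ with hf2
    have hf1mk : ∀ x, f1 (RingQuot.mkAlgHom K (relS K V R q) x)
        = RingQuot.mkAlgHom K (relS K V R q)
            (TensorAlgebra.lift K ((TensorAlgebra.ι K).comp θ.toLinearMap) x) := by
      intro x
      rw [hf1, RingQuot.liftAlgHom_mkAlgHom_apply]
      rfl
    have hf2mk : ∀ x, f2 (RingQuot.mkAlgHom K (relS K V R q) x)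
        = RingQuot.mkAlgHom K (relS K V R q)
            (TensorAlgebra.lift K ((TensorAlgebra.ι K).comp θ.symm.toLinearMap) x) := by
      intro x
      rw [hf2, RingQuot.liftAlgHom_mkAlgHom_apply]
      rfl
    refine ⟨AlgEquiv.ofAlgHom f1 f2 ?_ ?_, ?_⟩
    · refine RingQuot.ringQuot_ext' K _ _ ?_
      refine TensorAlgebra.hom_ext ?_
      refine LinearMap.ext fun v => ?_
      simp only [LinearMap.coe_comp, Function.comp_apply, AlgHom.toLinearMap_apply,
        AlgHom.comp_apply, AlgHom.coe_id, id_eq]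
      rw [hf2mk, hθm'ι, hf1mk, hθmι, LinearEquiv.apply_symm_apply]
    · refine RingQuot.ringQuot_ext' K _ _ ?_
      refine TensorAlgebra.hom_ext ?_
      refine LinearMap.ext fun v => ?_
      simp only [LinearMap.coe_comp, Function.comp_apply, AlgHom.toLinearMap_apply,
        AlgHom.comp_apply, AlgHom.coe_id, id_eq]
      rw [hf1mk, hθmι, hf2mk, hθm'ι, LinearEquiv.symm_apply_apply]
    · intro v
      show f1 (RingQuot.mkAlgHom K (relS K V R q) (TensorAlgebra.ι K v)) = _
      rw [hf1mk, hθmι]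
  · -- Λ(V,R)
    have hrel : ∀ ⦃x y⦄, relL K V R q x y →
        (RingQuot.mkAlgHom K (relL K V R q)).comp
          (TensorAlgebra.lift K ((TensorAlgebra.ι K).comp θ.toLinearMap)) x
        = (RingQuot.mkAlgHom K (relL K V R q)).comp
          (TensorAlgebra.lift K ((TensorAlgebra.ι K).comp θ.toLinearMap)) y := by
      rintro x y ⟨hy, w, hw0, hx⟩
      subst hy hx
      simp only [AlgHom.comp_apply, map_zero]
      rw [thmap_mur]
      have hker : (R - q • (LinearMap.id : V ⊗[K] V →ₗ[K] V ⊗[K] V))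
          (TensorProduct.map θ.toLinearMap θ.toLinearMap w) = 0 := by
        rw [← hcommL w, hw0, map_zero]
      have hr := RingQuot.mkAlgHom_rel K (s := relL K V R q)
        (x := mur K V (TensorProduct.map θ.toLinearMap θ.toLinearMap w)) (y := 0)
        ⟨rfl, TensorProduct.map θ.toLinearMap θ.toLinearMap w, hker, rfl⟩
      rw [map_zero] at hr
      exact hr
    have hrel' : ∀ ⦃x y⦄, relL K V R q x y →
        (RingQuot.mkAlgHom K (relL K V R q)).comp
          (TensorAlgebra.lift K ((TensorAlgebra.ι K).comp θ.symm.toLinearMap)) x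
        = (RingQuot.mkAlgHom K (relL K V R q)).comp
          (TensorAlgebra.lift K ((TensorAlgebra.ι K).comp θ.symm.toLinearMap)) y := by
      rintro x y ⟨hy, w, hw0, hx⟩
      subst hy hx
      simp only [AlgHom.comp_apply, map_zero]
      rw [thmap_mur]
      have hker : (R - q • (LinearMap.id : V ⊗[K] V →ₗ[K] V ⊗[K] V))
          (TensorProduct.map θ.symm.toLinearMap θ.symm.toLinearMap w) = 0 := by
        rw [← hcommL' w, hw0, map_zero]
      have hr := RingQuot.mkAlgHom_rel K (s := relL K V R q)
        (x := mur K V (TensorProduct.map θ.symm.toLinearMap θ.symm.toLinearMap w)) (y := 0)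
        ⟨rfl, TensorProduct.map θ.symm.toLinearMap θ.symm.toLinearMap w, hker, rfl⟩
      rw [map_zero] at hr
      exact hr
    set f1 := RingQuot.liftAlgHom K ⟨(RingQuot.mkAlgHom K (relL K V R q)).comp
      (TensorAlgebra.lift K ((TensorAlgebra.ι K).comp θ.toLinearMap)), hrel⟩ with hf1
    set f2 := RingQuot.liftAlgHom K ⟨(RingQuot.mkAlgHom K (relL K V R q)).comp
      (TensorAlgebra.lift K ((TensorAlgebra.ι K).comp θ.symm.toLinearMap)), hrel'⟩ with hf2
    have hf1mk : ∀ x, f1 (RingQuot.mkAlgHom K (relL K V R q) x)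
        = RingQuot.mkAlgHom K (relL K V R q)
            (TensorAlgebra.lift K ((TensorAlgebra.ι K).comp θ.toLinearMap) x) := by
      intro x
      rw [hf1, RingQuot.liftAlgHom_mkAlgHom_apply]
      rfl
    have hf2mk : ∀ x, f2 (RingQuot.mkAlgHom K (relL K V R q) x)
        = RingQuot.mkAlgHom K (relL K V R q)
            (TensorAlgebra.lift K ((TensorAlgebra.ι K).comp θ.symm.toLinearMap) x) := by
      intro x
      rw [hf2, RingQuot.liftAlgHom_mkAlgHom_apply]
      rfl
    refine ⟨AlgEquiv.ofAlgHom f1 f2 ?_ ?_, ?_⟩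
    · refine RingQuot.ringQuot_ext' K _ _ ?_
      refine TensorAlgebra.hom_ext ?_
      refine LinearMap.ext fun v => ?_
      simp only [LinearMap.coe_comp, Function.comp_apply, AlgHom.toLinearMap_apply,
        AlgHom.comp_apply, AlgHom.coe_id, id_eq]
      rw [hf2mk, hθm'ι, hf1mk, hθmι, LinearEquiv.apply_symm_apply]
    · refine RingQuot.ringQuot_ext' K _ _ ?_
      refine TensorAlgebra.hom_ext ?_
      refine LinearMap.ext fun v => ?_
      simp only [LinearMap.coe_comp, Function.comp_apply, AlgHom.toLinearMap_apply,
        AlgHom.comp_apply, AlgHom.coe_id, id_eq]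
      rw [hf1mk, hθmι, hf2mk, hθm'ι, LinearEquiv.symm_apply_apply]
    · intro v
      show f1 (RingQuot.mkAlgHom K (relL K V R q) (TensorAlgebra.ι K v)) = _
      rw [hf1mk, hθmι]
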